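/- Let F be a finite field with q = |F| elements and K a finite field extension of F. Let ζ ∈ K with ζ ≠ 0, and let P ∈ K[X] be a linearized polynomial with P(ζ) = 0. Then X^q − ζ^{q−1}·X right-divides P; that is, there exists a linearized polynomial Q ∈ K[X] such that P = Q ∘ (X^q − ζ^{q−1}·X). -/
import Mathlib


open Polynomial

/-- A polynomial over `K` is linearized (a `q`-polynomial) if every exponent in
its support is a power of `q`. -/
def IsLinearized (q : ℕ) {K : Type*} [Semiring K] (p : K[X]) : Prop :=
  ∀ n ∈ p.support, ∃ i : ℕ, n = q ^ i

lemma isLinearized_zero (q : ℕ) {K : Type*} [Semiring K] : IsLinearized q (0 : K[X]) := by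
  intro n hn
  simp at hn

lemma isLinearized_C_mul_X_pow (q : ℕ) {K : Type*} [Semiring K] (a : K) (j : ℕ) :
    IsLinearized q (C a * X ^ (q ^ j)) := by
  intro n hn
  have := Polynomial.support_C_mul_X_pow' (q ^ j) a hn
  simp only [Finset.mem_singleton] at this
  exact ⟨j, this⟩

lemma isLinearized_sub {q : ℕ} {K : Type*} [Ring K] {p r : K[X]}
    (hp : IsLinearized q p) (hr : IsLinearized q r) : IsLinearized q (p - r) := by
  intro n hn
  rw [mem_support_iff, coeff_sub] at hn
  by_cases h : p.coeff n = 0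
  · have : r.coeff n ≠ 0 := by
      intro h'; apply hn; rw [h, h']; simp
    exact hr n (mem_support_iff.2 this)
  · exact hp n (mem_support_iff.2 h)

lemma isLinearized_add {q : ℕ} {K : Type*} [Ring K] {p r : K[X]}
    (hp : IsLinearized q p) (hr : IsLinearized q r) : IsLinearized q (p + r) := by
  have := isLinearized_sub hp (q := q) (r := -r) ?_
  · simpa using this
  · intro n hn
    rw [mem_support_iff, coeff_neg, neg_ne_zero] at hn
    exact hr n (mem_support_iff.2 hn)

lemma key_induction {K : Type*} [Field K] (q p m : ℕ) [Fact p.Prime] [CharP K p]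
    (hq2 : 2 ≤ q) (hqp : q = p ^ m) (ζ : K) (hζ : ζ ≠ 0) :
    ∀ n : ℕ, ∀ P : K[X], P.natDegree ≤ n → IsLinearized q P → P.eval ζ = 0 →
      ∃ Q : K[X], IsLinearized q Q ∧ P = Q.comp (X ^ q - C (ζ ^ (q - 1)) * X) := by
  set c : K := ζ ^ (q - 1) with hc
  set B : K[X] := X ^ q - C c * X with hB
  have hq0 : q ≠ 0 := by omega
  -- eval of B at ζ is 0
  have hBζ : B.eval ζ = 0 := by
    have : c * ζ = ζ ^ q := by
      rw [hc, ← pow_succ]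
      congr 1
      omega
    simp [hB, this]
  -- natDegree of B
  have hdegCX : (C c * X : K[X]).natDegree < q := by
    calc (C c * X : K[X]).natDegree ≤ 1 := by
          apply Polynomial.natDegree_C_mul_le (c) X |>.trans
          simp
      _ < q := by omega
  have hdegB : B.natDegree = q := by
    rw [hB, Polynomial.natDegree_sub_eq_left_of_natDegree_lt]
    · exact natDegree_X_pow q
    · rwa [natDegree_X_pow]
  intro n
  induction n with
  | zero =>
    intro P hdeg hlin heval
    -- P is a constant; linearized constant has no support, so P = 0
    have hP0 : P = 0 := by
      have hPC : P = C (P.coeff 0) := Polynomial.eq_C_of_natDegree_le_zero hdeg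
      by_cases h0 : P.coeff 0 = 0
      · rw [hPC, h0, map_zero]
      · obtain ⟨i, hi⟩ := hlin 0 (mem_support_iff.2 h0)
        have : 0 < q ^ i := pow_pos (by omega) i
        omega
    exact ⟨0, isLinearized_zero q, by simp [hP0]⟩
  | succ n ih =>
    intro P hdeg hlin heval
    by_cases hle : P.natDegree ≤ n
    · exact ih P hle hlin heval
    have hPd : P.natDegree = n + 1 := by omega
    have hPne : P ≠ 0 := by
      intro h
      rw [h] at hPd
      simp at hPd
    obtain ⟨i, hi⟩ := hlin P.natDegree (natDegree_mem_support_of_nonzero hPne)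
    rcases i with _ | j
    · -- degree 1 case: P = a·X, so a·ζ = 0, so a = 0, contradiction
      simp only [pow_zero] at hi
      have h1 : P.natDegree ≤ 1 := le_of_eq hi
      have hP1 : P = C (P.coeff 1) * X + C (P.coeff 0) :=
        Polynomial.eq_X_add_C_of_natDegree_le_one h1
      have hc0 : P.coeff 0 = 0 := by
        by_cases h0 : P.coeff 0 = 0
        · exact h0
        · obtain ⟨k, hk⟩ := hlin 0 (mem_support_iff.2 h0)
          have : 0 < q ^ k := pow_pos (by omega) k
          omega
      have hc1 : P.coeff 1 = 0 := by
        have : P.coeff 1 * ζ = 0 := by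
          have := heval
          rw [hP1, hc0] at this
          simpa using this
        rcases mul_eq_zero.1 this with h | h
        · exact h
        · exact absurd h hζ
      have : P = 0 := by rw [hP1, hc0, hc1]; simp
      exact absurd this hPne
    · -- main case: natDegree P = q^(j+1)
      set a : K := P.leadingCoeff with ha
      have hane : a ≠ 0 := leadingCoeff_ne_zero.2 hPne
      -- Frobenius: B^(q^j) = X^(q^(j+1)) - C (c^(q^j)) * X^(q^j)
      have hfrob : B ^ (q ^ j) = X ^ (q ^ (j + 1)) - C (c ^ (q ^ j)) * X ^ (q ^ j) := by
        have hqj : q ^ j = p ^ (m * j) := by rw [hqp, ← pow_mul]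
        calc B ^ (q ^ j) = (X ^ q - C c * X) ^ (p ^ (m * j)) := by rw [hB, hqj]
          _ = (X ^ q) ^ (p ^ (m * j)) - (C c * X) ^ (p ^ (m * j)) := sub_pow_char_pow _ _ _
          _ = X ^ (q ^ (j + 1)) - C (c ^ (q ^ j)) * X ^ (q ^ j) := by
              rw [← hqj, ← pow_mul, mul_pow, ← map_pow]
              congr 2
              rw [pow_succ, mul_comm]
      set TB : K[X] := C a * X ^ (q ^ (j + 1)) - C (a * c ^ (q ^ j)) * X ^ (q ^ j) with hTB
      have hTBcomp : (C a * X ^ (q ^ j)).comp B = TB := by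
        rw [mul_comp, C_comp, X_pow_comp, hfrob, hTB, mul_sub, map_mul]
        ring
      have hlt : q ^ j < q ^ (j + 1) := pow_lt_pow_right₀ (by omega) (by omega)
      have hTBdeg : TB.natDegree = q ^ (j + 1) := by
        rw [hTB, Polynomial.natDegree_sub_eq_left_of_natDegree_lt, natDegree_C_mul_X_pow _ _ hane]
        · rw [natDegree_C_mul_X_pow _ _ hane]
          calc (C (a * c ^ (q ^ j)) * X ^ (q ^ j)).natDegree ≤ q ^ j := by
                apply (Polynomial.natDegree_C_mul_le _ _).trans
                simp
            _ < q ^ (j + 1) := hlt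
      have hTBne : TB ≠ 0 := by
        intro h
        rw [h] at hTBdeg
        have : 0 < q ^ (j + 1) := pow_pos (by omega) _
        simp at hTBdeg
        omega
      have hTBlc : TB.leadingCoeff = a := by
        rw [leadingCoeff, hTBdeg, hTB, coeff_sub, coeff_C_mul, coeff_C_mul, coeff_X_pow,
          coeff_X_pow, if_pos rfl, if_neg (by omega)]
        ring
      -- P' := P - TB
      have hdegeq : P.degree = TB.degree := by
        rw [degree_eq_natDegree hPne, degree_eq_natDegree hTBne, hi, hTBdeg]
      have hlceq : P.leadingCoeff = TB.leadingCoeff := by rw [hTBlc]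
      have hdlt : (P - TB).degree < P.degree := degree_sub_lt hdegeq hPne hlceq
      have hP'deg : (P - TB).natDegree ≤ n := by
        by_cases h0 : P - TB = 0
        · rw [h0]; simp
        · have := Polynomial.natDegree_lt_natDegree h0 hdlt
          omega
      have hP'lin : IsLinearized q (P - TB) := by
        apply isLinearized_sub hlin
        rw [hTB]
        exact isLinearized_sub (isLinearized_C_mul_X_pow q a (j + 1))
          (isLinearized_C_mul_X_pow q _ j)
      have hP'eval : (P - TB).eval ζ = 0 := by
        have hTBeval : TB.eval ζ = 0 := by
          rw [← hTBcomp, eval_comp, hBζ]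
          simp [zero_pow (pow_ne_zero j hq0)]
        rw [eval_sub, heval, hTBeval, sub_zero]
      obtain ⟨Q', hQ'lin, hQ'⟩ := ih (P - TB) hP'deg hP'lin hP'eval
      refine ⟨Q' + C a * X ^ (q ^ j), isLinearized_add hQ'lin (isLinearized_C_mul_X_pow q a j),
        ?_⟩
      rw [add_comp, ← hQ', hTBcomp]
      ring

/-- If `ζ ≠ 0` is a root of a linearized polynomial `P`, then `X^q - ζ^(q-1)·X`
right-divides `P`. -/
theorem annihilator_right_divides_of_root (F K : Type*) [Field F] [Fintype F]
    [Field K] [Fintype K] [Algebra F K]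
    (q : ℕ) (hq : q = Fintype.card F)
    (ζ : K) (hζ : ζ ≠ 0) (P : K[X]) (hP : IsLinearized q P)
    (hroot : P.eval ζ = 0) :
    ∃ Q : K[X], IsLinearized q Q ∧ P = Q.comp (X ^ q - C (ζ ^ (q - 1)) * X) := by
  set p := ringChar F with hp
  haveI : CharP F p := ringChar.charP F
  obtain ⟨m, hpprime, hcard⟩ := FiniteField.card F p
  haveI : Fact p.Prime := ⟨hpprime⟩
  haveI : CharP K p := charP_of_injective_algebraMap (algebraMap F K).injective p
  have hq2 : 2 ≤ q := hq ▸ Fintype.one_lt_card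
  have hqp : q = p ^ (m : ℕ) := by rw [hq, hcard]
  exact key_induction q p m hq2 hqp ζ hζ P.natDegree P le_rfl hP hroot
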